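/- arXiv:1911.05823 — 3 statements merged into one kernel-verified Lean document; each statement's English description precedes it below -/
import Mathlib

section
/- Coburn's theorem: if v is an isometry in a unital C*-algebra A with vv* ≠ 1, and T is the unilateral shift generating the Toeplitz algebra 𝒯 ⊂ B(ℓ²(ℕ)), then there exists a unique unital *-homomorphism φ : 𝒯 → A with φ(T) = v, and φ is isometric (injective). -/
open ContinuousLinearMap


noncomputable section CoburnAux

open Finsupp

set_option linter.unusedSectionVars false

variable {R : Type*} [Ring R] [StarRing R] [Algebra ℂ R] [StarModule ℂ R]

/-- The monomial `w^m (w*)^n`. -/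
def cbMono (w : R) (p : ℕ × ℕ) : R := w ^ p.1 * (star w) ^ p.2

/-- The linear map sending coefficients to combinations of monomials. -/
def cbTheta (w : R) : ((ℕ × ℕ) →₀ ℂ) →ₗ[ℂ] R :=
  Finsupp.linearCombination ℂ (cbMono w)

lemma cbTheta_single (w : R) (p : ℕ × ℕ) (a : ℂ) :
    cbTheta w (Finsupp.single p a) = a • cbMono w p := by
  simp [cbTheta]

lemma cbTheta_apply (w : R) (c : (ℕ × ℕ) →₀ ℂ) :
    cbTheta w c = c.sum fun p a => a • cbMono w p := by
  simp [cbTheta, Finsupp.linearCombination_apply]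

variable {w : R} (hw : star w * w = 1)

include hw

lemma cb_starpow_mul_pow_self (n : ℕ) : (star w) ^ n * w ^ n = 1 := by
  induction n with
  | zero => simp
  | succ n ih =>
    have : (star w) ^ n * star w * (w * w ^ n) = (star w) ^ n * (star w * w) * w ^ n := by
      rw [mul_assoc, ← mul_assoc (star w), mul_assoc ((star w) ^ n)]
    rw [pow_succ, pow_succ', this, hw, mul_one, ih]

lemma cb_starpow_mul_pow (n p : ℕ) :
    (star w) ^ n * w ^ p = if n ≤ p then w ^ (p - n) else (star w) ^ (n - p) := by
  split_ifs with h
  · conv_lhs => rw [show p = n + (p - n) by omega, pow_add, ← mul_assoc,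
      cb_starpow_mul_pow_self hw, one_mul]
  · conv_lhs => rw [show n = (n - p) + p by omega, pow_add, mul_assoc,
      cb_starpow_mul_pow_self hw, mul_one]

/-- Where the product of two monomials lands. -/
def cbTarget (x y : ℕ × ℕ) : ℕ × ℕ :=
  if x.2 ≤ y.1 then (x.1 + (y.1 - x.2), y.2) else (x.1, x.2 - y.1 + y.2)

lemma cbMono_mul (x y : ℕ × ℕ) :
    cbMono w x * cbMono w y = cbMono w (cbTarget x y) := by
  obtain ⟨m, n⟩ := x; obtain ⟨p, q⟩ := y
  simp only [cbMono, cbTarget]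
  rw [mul_assoc, ← mul_assoc ((star w) ^ n), cb_starpow_mul_pow hw]
  split_ifs with h
  · simp [← mul_assoc, ← pow_add]
  · simp [mul_assoc, ← pow_add]

omit hw

/-- Convolution of coefficients matching multiplication of monomial combinations. -/
def cbConv (c c' : (ℕ × ℕ) →₀ ℂ) : (ℕ × ℕ) →₀ ℂ :=
  c.sum fun x a => c'.sum fun y b => Finsupp.single (cbTarget x y) (a * b)

include hw

lemma cbTheta_mul (c c' : (ℕ × ℕ) →₀ ℂ) :
    cbTheta w (cbConv c c') = cbTheta w c * cbTheta w c' := by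
  rw [cbConv, map_finsuppSum, cbTheta_apply, cbTheta_apply, Finsupp.sum_mul]
  refine Finsupp.sum_congr fun x hx => ?_
  rw [map_finsuppSum, Finsupp.mul_sum]
  refine Finsupp.sum_congr fun y hy => ?_
  rw [cbTheta_single, ← cbMono_mul hw, smul_mul_smul_comm]

omit hw

/-- Star of coefficients. -/
def cbStar (c : (ℕ × ℕ) →₀ ℂ) : (ℕ × ℕ) →₀ ℂ :=
  c.sum fun x a => Finsupp.single (x.2, x.1) (starRingEnd ℂ a)

lemma cbTheta_star (c : (ℕ × ℕ) →₀ ℂ) :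
    cbTheta w (cbStar c) = star (cbTheta w c) := by
  rw [cbStar, map_finsuppSum, cbTheta_apply, Finsupp.sum, Finsupp.sum, star_sum]
  refine Finset.sum_congr rfl fun x hx => ?_
  rw [cbTheta_single, star_smul]
  congr 1
  simp only [cbMono, star_mul, star_pow, star_star]

/-- support bound predicate -/
def cbDeg (c : (ℕ × ℕ) →₀ ℂ) (D : ℕ) : Prop := ∀ p ∈ c.support, p.1 < D ∧ p.2 < D

lemma cbDeg_star {c : (ℕ × ℕ) →₀ ℂ} {D : ℕ} (h : cbDeg c D) : cbDeg (cbStar c) D := by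
  intro p hp
  have := Finsupp.support_sum hp
  obtain ⟨x, hx, hpx⟩ := Finset.mem_biUnion.mp this
  have := Finsupp.support_single_subset hpx
  simp only [Finset.mem_singleton] at this
  subst this
  exact ⟨(h x hx).2, (h x hx).1⟩

lemma cbDeg_conv {c c' : (ℕ × ℕ) →₀ ℂ} {D D' : ℕ} (h : cbDeg c D) (h' : cbDeg c' D') :
    cbDeg (cbConv c c') (D + D') := by
  intro p hp
  obtain ⟨x, hx, hpx⟩ := Finset.mem_biUnion.mp (Finsupp.support_sum hp)
  obtain ⟨y, hy, hpy⟩ := Finset.mem_biUnion.mp (Finsupp.support_sum hpx)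
  have := Finsupp.support_single_subset hpy
  simp only [Finset.mem_singleton] at this
  subst this
  obtain ⟨h1, h2⟩ := h x hx
  obtain ⟨h3, h4⟩ := h' y hy
  unfold cbTarget
  split_ifs with hc <;> constructor <;> simp <;> omega

lemma cbDeg_card {c : (ℕ × ℕ) →₀ ℂ} {D : ℕ} (h : cbDeg c D) :
    c.support.card ≤ D * D := by
  have : c.support ⊆ Finset.range D ×ˢ Finset.range D := by
    intro p hp
    simp only [Finset.mem_product, Finset.mem_range]
    exact (h p hp)
  calc c.support.card ≤ (Finset.range D ×ˢ Finset.range D).card := Finset.card_le_card this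
  _ = D * D := by simp

lemma cbDeg_exists (c : (ℕ × ℕ) →₀ ℂ) : ∃ D, 0 < D ∧ cbDeg c D := by
  refine ⟨(c.support.sup fun p => max p.1 p.2) + 1, Nat.succ_pos _, fun p hp => ?_⟩
  have := Finset.le_sup (f := fun p : ℕ × ℕ => max p.1 p.2) hp
  simp only [le_max_iff, max_le_iff] at this ⊢
  omega

end CoburnAux

section Norms

variable {R S : Type*}
  [NormedRing R] [StarRing R] [CStarRing R] [NormedAlgebra ℂ R] [StarModule ℂ R] [Nontrivial R]
  [NormedRing S] [StarRing S] [CStarRing S] [NormedAlgebra ℂ S] [StarModule ℂ S] [Nontrivial S]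

lemma cb_norm_isom {w : R} (hw : star w * w = 1) : ‖w‖ = 1 := by
  have h1 : ‖w‖ * ‖w‖ = 1 := by rw [← CStarRing.norm_star_mul_self, hw, norm_one]
  nlinarith [norm_nonneg w]

lemma cb_norm_mono_le {w : R} (hw : star w * w = 1) (p : ℕ × ℕ) : ‖cbMono w p‖ ≤ 1 := by
  calc ‖w ^ p.1 * (star w) ^ p.2‖ ≤ ‖w ^ p.1‖ * ‖(star w) ^ p.2‖ := norm_mul_le _ _
  _ ≤ ‖w‖ ^ p.1 * ‖star w‖ ^ p.2 := by
      gcongr <;> first | exact norm_pow_le' _ (by positivity) |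
        (rcases Nat.eq_zero_or_pos p.1 with h | h
         · simp [h]
         · exact norm_pow_le' _ h) |
        (rcases Nat.eq_zero_or_pos p.2 with h | h
         · simp [h]
         · exact norm_pow_le' _ h)
  _ = 1 := by rw [norm_star, cb_norm_isom hw]; simp

lemma cb_norm_theta_le {w : R} (hw : star w * w = 1) (c : (ℕ × ℕ) →₀ ℂ) :
    ‖cbTheta w c‖ ≤ ∑ p ∈ c.support, ‖c p‖ := by
  rw [cbTheta_apply, Finsupp.sum]
  calc ‖∑ p ∈ c.support, c p • cbMono w p‖ ≤ ∑ p ∈ c.support, ‖c p • cbMono w p‖ :=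
    norm_sum_le _ _
  _ ≤ ∑ p ∈ c.support, ‖c p‖ := by
      refine Finset.sum_le_sum fun p hp => ?_
      rw [norm_smul]
      calc ‖c p‖ * ‖cbMono w p‖ ≤ ‖c p‖ * 1 := by
            gcongr; exact cb_norm_mono_le hw p
      _ = ‖c p‖ := mul_one _

lemma cb_sa_pow_norm {b : R} (hb : IsSelfAdjoint b) (k : ℕ) :
    ‖b ^ 2 ^ k‖ = ‖b‖ ^ 2 ^ k := by
  have h := hb.nnnorm_pow_two_pow (E := R) k
  have h2 := congrArg NNReal.toReal h
  simpa using h2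

/-- The key contraction lemma: if coefficients can be extracted with a uniform bound from
`cbTheta wT`, then `cbTheta wS` is dominated by `cbTheta wT` in norm. -/
lemma cb_contract {wT : R} {wS : S} (hwT : star wT * wT = 1) (hwS : star wS * wS = 1)
    (hcoef : ∀ c : (ℕ × ℕ) →₀ ℂ, ∀ p, ‖c p‖ ≤ 2 * ‖cbTheta wT c‖)
    (c : (ℕ × ℕ) →₀ ℂ) : ‖cbTheta wS c‖ ≤ ‖cbTheta wT c‖ := by
  -- first, a crude degree-dependent bound
  have crude : ∀ (d : (ℕ × ℕ) →₀ ℂ) (D : ℕ), cbDeg d D →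
      ‖cbTheta wS d‖ ≤ ((D:ℝ) * D) * (2 * ‖cbTheta wT d‖) := by
    intro d D hD
    calc ‖cbTheta wS d‖ ≤ ∑ p ∈ d.support, ‖d p‖ := cb_norm_theta_le hwS d
    _ ≤ ∑ _p ∈ d.support, (2 * ‖cbTheta wT d‖) :=
        Finset.sum_le_sum fun p _ => hcoef d p
    _ = d.support.card * (2 * ‖cbTheta wT d‖) := by
        rw [Finset.sum_const, nsmul_eq_mul]
    _ ≤ ((D:ℝ) * D) * (2 * ‖cbTheta wT d‖) := by
        have h1 := cbDeg_card hD
        have h2 : (0:ℝ) ≤ 2 * ‖cbTheta wT d‖ := by positivity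
        have h3 : (d.support.card : ℝ) ≤ (D:ℝ) * D := by exact_mod_cast h1
        exact mul_le_mul_of_nonneg_right h3 h2
  -- the selfadjoint element c₁ := (star c) * c
  set c₁ : (ℕ × ℕ) →₀ ℂ := cbConv (cbStar c) c with hc₁
  obtain ⟨D, hDpos, hD⟩ := cbDeg_exists c₁
  -- iterated squares
  set d : ℕ → ((ℕ × ℕ) →₀ ℂ) := fun k => Nat.rec c₁ (fun _ dk => cbConv dk dk) k with hd
  have hd0 : d 0 = c₁ := rfl
  have hdsucc : ∀ k, d (k + 1) = cbConv (d k) (d k) := fun k => rfl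
  have hdeg : ∀ k, cbDeg (d k) (2 ^ k * D) := by
    intro k
    induction k with
    | zero => rw [pow_zero, one_mul]; exact hD
    | succ k ih =>
      have h := cbDeg_conv ih ih
      have heq : 2 ^ (k + 1) * D = 2 ^ k * D + 2 ^ k * D := by ring
      rw [hdsucc, heq]
      exact h
  -- the two sides
  have hTpow : ∀ k, cbTheta wT (d k) = (cbTheta wT c₁) ^ 2 ^ k := by
    intro k
    induction k with
    | zero => simp [hd0]
    | succ k ih =>
      rw [hdsucc, cbTheta_mul hwT, ih, ← pow_add]
      congr 1
      ring
  have hSpow : ∀ k, cbTheta wS (d k) = (cbTheta wS c₁) ^ 2 ^ k := by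
    intro k
    induction k with
    | zero => simp [hd0]
    | succ k ih =>
      rw [hdsucc, cbTheta_mul hwS, ih, ← pow_add]
      congr 1
      ring
  have hsaT : IsSelfAdjoint (cbTheta wT c₁) := by
    rw [hc₁, cbTheta_mul hwT, cbTheta_star]
    exact IsSelfAdjoint.star_mul_self _
  have hsaS : IsSelfAdjoint (cbTheta wS c₁) := by
    rw [hc₁, cbTheta_mul hwS, cbTheta_star]
    exact IsSelfAdjoint.star_mul_self _
  -- main inequality for the selfadjoint elements
  have key : ‖cbTheta wS c₁‖ ≤ ‖cbTheta wT c₁‖ := by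
    set X : ℝ := ‖cbTheta wS c₁‖ with hX
    set Y : ℝ := ‖cbTheta wT c₁‖ with hY
    have hXnn : 0 ≤ X := norm_nonneg _
    have hYnn : 0 ≤ Y := norm_nonneg _
    have hiter : ∀ k : ℕ, X ^ 2 ^ k ≤ ((2:ℝ) ^ k * D) * ((2:ℝ) ^ k * D) * (2 * Y ^ 2 ^ k) := by
      intro k
      have h1 := crude (d k) (2 ^ k * D) (hdeg k)
      rw [hSpow, hTpow, cb_sa_pow_norm hsaS, cb_sa_pow_norm hsaT] at h1
      exact_mod_cast h1
    rcases eq_or_lt_of_le hYnn with hY0 | hYpos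
    · have h0 := hiter 0
      norm_num at h0
      rw [← hY0] at h0
      norm_num at h0
      linarith
    · by_contra hcon
      push_neg at hcon
      set ρ : ℝ := X / Y with hρdef
      have hρ : 1 < ρ := (one_lt_div hYpos).mpr hcon
      have hρpos : 0 < ρ := lt_trans one_pos hρ
      have hbound : ∀ k : ℕ, ρ ^ 2 ^ k ≤ 2 * (D:ℝ)^2 * ((2:ℝ) ^ k)^2 := by
        intro k
        have h1 := hiter k
        have h2 : X ^ 2 ^ k / Y ^ 2 ^ k ≤ ((2:ℝ) ^ k * D) * ((2:ℝ) ^ k * D) * 2 := by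
          rw [div_le_iff₀ (by positivity)]
          calc X ^ 2 ^ k ≤ ((2:ℝ) ^ k * D) * ((2:ℝ) ^ k * D) * (2 * Y ^ 2 ^ k) := h1
          _ = ((2:ℝ) ^ k * D) * ((2:ℝ) ^ k * D) * 2 * Y ^ 2 ^ k := by ring
        rw [← div_pow] at h2
        calc ρ ^ 2 ^ k ≤ ((2:ℝ) ^ k * D) * ((2:ℝ) ^ k * D) * 2 := h2
        _ = 2 * (D:ℝ)^2 * ((2:ℝ) ^ k)^2 := by ring
      have hpos : (0:ℝ) < 1 / (2 * (D:ℝ)^2) := by positivity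
      have htend := tendsto_pow_const_div_const_pow_of_one_lt 2 hρ
      have hev : ∀ᶠ n : ℕ in Filter.atTop, (n:ℝ)^2 / ρ ^ n < 1 / (2 * (D:ℝ)^2) :=
        htend.eventually_lt_const hpos
      obtain ⟨N, hN⟩ := Filter.eventually_atTop.mp hev
      have h2 := hN (2 ^ N) (Nat.lt_two_pow_self).le
      have h1 := hbound N
      have hppos : (0:ℝ) < ρ ^ 2 ^ N := pow_pos hρpos _
      rw [div_lt_iff₀ hppos] at h2
      have hcast : ((2 ^ N : ℕ) : ℝ) = (2:ℝ) ^ N := by push_cast; ring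
      rw [hcast] at h2
      have h3 := mul_lt_mul_of_pos_left h2 (show (0:ℝ) < 2 * (D:ℝ)^2 by positivity)
      have h4 : 2 * (D:ℝ)^2 * (1 / (2 * (D:ℝ)^2) * ρ ^ 2 ^ N) = ρ ^ 2 ^ N := by
        field_simp
      rw [h4] at h3
      linarith
  -- conclude
  have h1 : ‖cbTheta wS c‖ * ‖cbTheta wS c‖ = ‖cbTheta wS c₁‖ := by
    rw [hc₁, cbTheta_mul hwS, cbTheta_star, CStarRing.norm_star_mul_self]
  have h2 : ‖cbTheta wT c‖ * ‖cbTheta wT c‖ = ‖cbTheta wT c₁‖ := by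
    rw [hc₁, cbTheta_mul hwT, cbTheta_star, CStarRing.norm_star_mul_self]
  nlinarith [norm_nonneg (cbTheta wS c), norm_nonneg (cbTheta wT c), key]

end Norms

section Shift

variable {H : Type*} [NormedAddCommGroup H] [InnerProductSpace ℂ H] [CompleteSpace H]
  (f : HilbertBasis ℕ ℂ H) (T : H →L[ℂ] H) (hT : ∀ k : ℕ, T (f k) = f (k + 1))

lemma cb_inner_basis (i j : ℕ) : (inner ℂ (f i) (f j) : ℂ) = if i = j then 1 else 0 :=
  orthonormal_iff_ite.mp f.orthonormal i j

lemma cb_vext {x y : H} (h : ∀ i, (inner ℂ (f i) x : ℂ) = inner ℂ (f i) y) : x = y := by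
  apply f.repr.injective
  ext i
  rw [f.repr_apply_apply, f.repr_apply_apply]
  exact h i

include hT

lemma cb_Tpow (p k : ℕ) : (T ^ p) (f k) = f (k + p) := by
  induction p generalizing k with
  | zero => simp
  | succ p ih =>
    rw [pow_succ, ContinuousLinearMap.mul_apply, hT, ih]
    congr 1
    omega

lemma cb_Tadj (k : ℕ) : (star T) (f k) = if k = 0 then 0 else f (k - 1) := by
  apply cb_vext f
  intro i
  rw [ContinuousLinearMap.star_eq_adjoint, ContinuousLinearMap.adjoint_inner_right, hT]
  rcases k with _ | k
  · simp [cb_inner_basis f]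
  · simp only [Nat.succ_ne_zero, if_false, Nat.add_sub_cancel]
    rw [cb_inner_basis f, cb_inner_basis f]
    congr 1
    simp [Nat.add_right_cancel_iff]

lemma cb_Tadjpow (q n : ℕ) : ((star T) ^ q) (f n) = if q ≤ n then f (n - q) else 0 := by
  induction q generalizing n with
  | zero => simp
  | succ q ih =>
    rw [pow_succ, ContinuousLinearMap.mul_apply, cb_Tadj f T hT]
    rcases n with _ | n
    · simp
    · simp only [Nat.succ_ne_zero, if_false, Nat.add_sub_cancel]
      rw [ih]
      by_cases h : q ≤ n
      · rw [if_pos h, if_pos (by omega)]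
        congr 1
        omega
      · rw [if_neg h, if_neg (by omega)]

end Shift

section Shift2

variable {H : Type*} [NormedAddCommGroup H] [InnerProductSpace ℂ H] [CompleteSpace H]
  (f : HilbertBasis ℕ ℂ H) (T : H →L[ℂ] H) (hT : ∀ k : ℕ, T (f k) = f (k + 1))

lemma cb_dense_span : Dense ((Submodule.span ℂ (Set.range ⇑f) : Submodule ℂ H) : Set H) :=
  Submodule.dense_iff_topologicalClosure_eq_top.mpr f.dense_span

lemma cb_clm_ext {S₁ S₂ : H →L[ℂ] H} (h : ∀ i, S₁ (f i) = S₂ (f i)) : S₁ = S₂ := by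
  have heq : Set.EqOn ⇑S₁ ⇑S₂ ((Submodule.span ℂ (Set.range ⇑f) : Submodule ℂ H) : Set H) := by
    have h2 : Set.EqOn ⇑S₁ ⇑S₂ (Set.range ⇑f) := by
      rintro x ⟨i, rfl⟩
      exact h i
    exact LinearMap.eqOn_span' (f := (S₁ : H →ₗ[ℂ] H)) (g := (S₂ : H →ₗ[ℂ] H)) h2
  exact ContinuousLinearMap.ext fun x =>
    congrFun (Continuous.ext_on (cb_dense_span f) S₁.continuous S₂.continuous heq) x

include hT

lemma cb_Tisom : star T * T = 1 := by
  apply cb_clm_ext f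
  intro i
  rw [ContinuousLinearMap.mul_apply, hT, cb_Tadj f T hT]
  simp

/-- matrix coefficient of a monomial -/
lemma cb_amono (m n p q : ℕ) :
    (inner ℂ (f m) ((cbMono T (p, q)) (f n)) : ℂ) =
      if q ≤ n ∧ m + q = n + p then 1 else 0 := by
  rw [cbMono, ContinuousLinearMap.mul_apply, cb_Tadjpow f T hT]
  by_cases h : q ≤ n
  · rw [if_pos h, cb_Tpow f T hT, cb_inner_basis f]
    congr 1
    simp only [eq_iff_iff]
    constructor <;> intro h2 <;> omega
  · rw [if_neg h, map_zero, inner_zero_right, if_neg (by tauto)]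

/-- matrix coefficient of `cbTheta T c` -/
lemma cb_aTheta (c : (ℕ × ℕ) →₀ ℂ) (m n : ℕ) :
    (inner ℂ (f m) ((cbTheta T c) (f n)) : ℂ) =
      ∑ x ∈ c.support, c x * (if x.2 ≤ n ∧ m + x.2 = n + x.1 then 1 else 0) := by
  rw [cbTheta_apply, Finsupp.sum]
  have happ : ((∑ x ∈ c.support, c x • cbMono T x) (f n) : H) =
      ∑ x ∈ c.support, c x • (cbMono T x) (f n) := by
    rw [ContinuousLinearMap.coe_sum']
    rw [Finset.sum_apply]
    simp [ContinuousLinearMap.smul_apply]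
  rw [happ, inner_sum]
  refine Finset.sum_congr rfl fun x hx => ?_
  rw [inner_smul_right]
  obtain ⟨p, q⟩ := x
  rw [cb_amono f T hT]

lemma cb_extract (c : (ℕ × ℕ) →₀ ℂ) (m n : ℕ) :
    c (m, n) = (inner ℂ (f m) ((cbTheta T c) (f n)) : ℂ) -
      (if m = 0 ∨ n = 0 then 0 else inner ℂ (f (m-1)) ((cbTheta T c) (f (n-1)))) := by
  rw [cb_aTheta f T hT]
  by_cases h0 : m = 0 ∨ n = 0
  · rw [if_pos h0, sub_zero]
    have : ∀ x ∈ c.support,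
        c x * (if x.2 ≤ n ∧ m + x.2 = n + x.1 then 1 else 0) =
        if x = (m, n) then c x else 0 := by
      rintro ⟨p, q⟩ hx
      by_cases hc : q ≤ n ∧ m + q = n + p
      · rw [if_pos hc, mul_one, if_pos]
        obtain ⟨h1, h2⟩ := hc
        have hpm : p = m ∧ q = n := by rcases h0 with h | h <;> omega
        simp [Prod.ext_iff, hpm.1, hpm.2]
      · rw [if_neg hc, mul_zero, if_neg]
        intro he
        simp only [Prod.mk.injEq] at he
        obtain ⟨h5, h6⟩ := he
        exact hc ⟨by omega, by omega⟩
    rw [Finset.sum_congr rfl this, Finset.sum_ite_eq' c.support (m, n) c]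
    split_ifs with hm
    · rfl
    · exact Finsupp.notMem_support_iff.mp hm
  · rw [if_neg h0]
    push_neg at h0
    obtain ⟨hm, hn⟩ := h0
    rw [cb_aTheta f T hT, ← Finset.sum_sub_distrib]
    have : ∀ x ∈ c.support,
        c x * (if x.2 ≤ n ∧ m + x.2 = n + x.1 then 1 else 0) -
        c x * (if x.2 ≤ n-1 ∧ (m-1) + x.2 = (n-1) + x.1 then 1 else 0) =
        if x = (m, n) then c x else 0 := by
      rintro ⟨p, q⟩ hx
      simp only
      by_cases hc1 : q ≤ n ∧ m + q = n + p
      · by_cases hc2 : q ≤ n - 1 ∧ (m-1) + q = (n-1) + p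
        · rw [if_pos hc1, if_pos hc2, if_neg, sub_self]
          intro he
          simp only [Prod.mk.injEq] at he
          omega
        · rw [if_pos hc1, if_neg hc2, mul_one, mul_zero, sub_zero, if_pos]
          have : q = n ∧ p = m := by omega
          simp [Prod.ext_iff, this.1, this.2]
      · by_cases hc2 : q ≤ n - 1 ∧ (m-1) + q = (n-1) + p
        · exfalso; omega
        · rw [if_neg hc1, if_neg hc2, mul_zero, sub_zero, if_neg]
          intro he
          simp only [Prod.mk.injEq] at he
          obtain ⟨h5, h6⟩ := he
          exact hc1 ⟨by omega, by omega⟩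
    rw [Finset.sum_congr rfl this, Finset.sum_ite_eq' c.support (m, n) c]
    split_ifs with hm2
    · rfl
    · exact Finsupp.notMem_support_iff.mp hm2

lemma cb_coef_bound (c : (ℕ × ℕ) →₀ ℂ) (p : ℕ × ℕ) :
    ‖c p‖ ≤ 2 * ‖cbTheta T c‖ := by
  obtain ⟨m, n⟩ := p
  have habs : ∀ i j : ℕ, ‖(inner ℂ (f i) ((cbTheta T c) (f j)) : ℂ)‖ ≤ ‖cbTheta T c‖ := by
    intro i j
    calc ‖(inner ℂ (f i) ((cbTheta T c) (f j)) : ℂ)‖ ≤ ‖f i‖ * ‖(cbTheta T c) (f j)‖ :=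
      norm_inner_le_norm _ _
    _ ≤ ‖f i‖ * (‖cbTheta T c‖ * ‖f j‖) := by
        gcongr
        exact (cbTheta T c).le_opNorm _
    _ = ‖cbTheta T c‖ := by rw [f.orthonormal.1 i, f.orthonormal.1 j]; ring
  rw [cb_extract f T hT c m n]
  split_ifs with h0
  · rw [sub_zero]
    calc _ ≤ ‖cbTheta T c‖ := habs m n
    _ ≤ 2 * ‖cbTheta T c‖ := by nlinarith [norm_nonneg (cbTheta T c)]
  · calc _ ≤ ‖(inner ℂ (f m) ((cbTheta T c) (f n)) : ℂ)‖ +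
        ‖(inner ℂ (f (m-1)) ((cbTheta T c) (f (n-1))) : ℂ)‖ := norm_sub_le _ _
    _ ≤ 2 * ‖cbTheta T c‖ := by
        have := habs m n
        have := habs (m-1) (n-1)
        linarith

lemma cb_theta_T_inj : Function.Injective (cbTheta T) := by
  rw [injective_iff_map_eq_zero]
  intro c hc
  ext p
  obtain ⟨m, n⟩ := p
  rw [cb_extract f T hT c m n, hc]
  simp

end Shift2

section Eside

variable {R : Type*} [Ring R] [StarRing R] [Algebra ℂ R] [StarModule ℂ R]
variable {v : R} (hv : star v * v = 1)

/-- The defect projection of an isometry. -/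
def cbE (v : R) : R := 1 - v * star v

include hv

lemma cb_e_mul_v : cbE v * v = 0 := by
  rw [cbE, sub_mul, one_mul, mul_assoc, hv, mul_one, sub_self]

lemma cb_sv_mul_e : star v * cbE v = 0 := by
  rw [cbE, mul_sub, mul_one, ← mul_assoc, hv, one_mul, sub_self]

lemma cb_e_mul_pow (k : ℕ) : cbE v * v ^ k = if k = 0 then cbE v else 0 := by
  rcases k with _ | k
  · simp
  · rw [if_neg (Nat.succ_ne_zero k), pow_succ', ← mul_assoc, cb_e_mul_v hv, zero_mul]

lemma cb_spow_mul_e (k : ℕ) : (star v) ^ k * cbE v = if k = 0 then cbE v else 0 := by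
  rcases k with _ | k
  · simp
  · rw [if_neg (Nat.succ_ne_zero k), pow_succ, mul_assoc, cb_sv_mul_e hv, mul_zero]

lemma cb_e_mul_e : cbE v * cbE v = cbE v := by
  have h : cbE v * (v * star v) = 0 := by
    rw [← mul_assoc, cb_e_mul_v hv, zero_mul]
  rw [cbE, mul_sub, mul_one, ← cbE, h, sub_zero]

lemma cb_e_spow_pow (m p : ℕ) :
    cbE v * ((star v) ^ m * v ^ p) = if p ≤ m then cbE v * (star v) ^ (m - p) else 0 := by
  rw [cb_starpow_mul_pow hv]
  by_cases h : m ≤ p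
  · rw [if_pos h, cb_e_mul_pow hv]
    by_cases h2 : p ≤ m
    · have : p = m := le_antisymm h2 h
      subst this
      simp
    · rw [if_neg (by omega), if_neg h2]
  · rw [if_neg h, if_pos (by omega)]

lemma cb_spow_pow_e (q n : ℕ) :
    ((star v) ^ q * v ^ n) * cbE v = if q ≤ n then v ^ (n - q) * cbE v else 0 := by
  rw [cb_starpow_mul_pow hv]
  by_cases h : q ≤ n
  · simp only [if_pos h]
  · rw [if_neg h, if_neg h, cb_spow_mul_e hv, if_neg (by omega)]

lemma cb_e_spow_pow_e (a b : ℕ) :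
    (cbE v * (star v) ^ a) * (v ^ b * cbE v) = if a = b then cbE v else 0 := by
  have h1 : cbE v * ((star v) ^ a * v ^ b) * cbE v = _ := rfl
  calc (cbE v * (star v) ^ a) * (v ^ b * cbE v)
      = cbE v * ((star v) ^ a * v ^ b) * cbE v := by
        simp only [mul_assoc]
  _ = (if b ≤ a then cbE v * (star v) ^ (a - b) else 0) * cbE v := by
        rw [cb_e_spow_pow hv]
  _ = if a = b then cbE v else 0 := by
        by_cases h : b ≤ a
        · rw [if_pos h, mul_assoc, cb_spow_mul_e hv]
          by_cases h2 : a = b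
          · rw [if_pos (by omega), if_pos h2, cb_e_mul_e hv]
          · rw [if_neg (by omega), if_neg h2, mul_zero]
        · rw [if_neg h, zero_mul, if_neg (by omega)]

/-- The key monomial computation on the `A` side. -/
lemma cb_Amono (m n p q : ℕ) :
    (cbE v * (star v) ^ m) * (cbMono v (p, q) * (v ^ n * cbE v)) =
      if q ≤ n ∧ m + q = n + p then cbE v else 0 := by
  have expand : (cbE v * (star v) ^ m) * (cbMono v (p, q) * (v ^ n * cbE v)) =
      (cbE v * ((star v) ^ m * v ^ p)) * (((star v) ^ q * v ^ n) * cbE v) := by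
    simp only [cbMono, mul_assoc]
  rw [expand, cb_e_spow_pow hv, cb_spow_pow_e hv]
  by_cases h1 : p ≤ m
  · by_cases h2 : q ≤ n
    · rw [if_pos h1, if_pos h2, cb_e_spow_pow_e hv]
      by_cases h3 : m - p = n - q
      · rw [if_pos h3, if_pos (by constructor <;> omega)]
      · rw [if_neg h3, if_neg (by intro hc; obtain ⟨hc1, hc2⟩ := hc; omega)]
    · rw [if_pos h1, if_neg h2, mul_zero, if_neg (by tauto)]
  · by_cases h2 : q ≤ n
    · rw [if_neg h1, zero_mul, if_neg (by intro hc; obtain ⟨hc1, hc2⟩ := hc; omega)]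
    · rw [if_neg h1, zero_mul, if_neg (by tauto)]

/-- compression of `cbTheta v c` by matrix units. -/
lemma cb_Acompress (c : (ℕ × ℕ) →₀ ℂ) (m n : ℕ) :
    (cbE v * (star v) ^ m) * (cbTheta v c * (v ^ n * cbE v)) =
      (∑ x ∈ c.support, c x * (if x.2 ≤ n ∧ m + x.2 = n + x.1 then 1 else 0)) • cbE v := by
  have h1 : cbTheta v c * (v ^ n * cbE v) = ∑ x ∈ c.support, c x • (cbMono v x * (v ^ n * cbE v)) := by
    rw [cbTheta_apply, Finsupp.sum, Finset.sum_mul]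
    exact Finset.sum_congr rfl fun x _ => smul_mul_assoc _ _ _
  rw [h1, Finset.mul_sum, Finset.sum_smul]
  refine Finset.sum_congr rfl fun x hx => ?_
  obtain ⟨p, q⟩ := x
  rw [mul_smul_comm]
  have h2 := cb_Amono hv m n p q
  simp only [mul_assoc] at h2 ⊢
  rw [h2]
  by_cases h : q ≤ n ∧ m + q = n + p
  · rw [if_pos h, if_pos h, mul_one]
  · rw [if_neg h, if_neg h, mul_zero, smul_zero, zero_smul]

end Eside


set_option maxHeartbeats 2000000 in
/-- Coburn's theorem: let `T` be the unilateral shift (`T fₖ = f_{k+1}` for an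
orthonormal basis of `ℓ²(ℕ)`) and `𝒯` the Toeplitz algebra, i.e. the smallest closed
*-subalgebra of `B(ℓ²(ℕ))` containing `T`.  If `v` is an isometry (`v*v = 1`) in a
unital C*-algebra `A` with `vv* ≠ 1`, then there is a unique unital *-homomorphism
`φ : 𝒯 → A` with `φ(T) = v`, and `φ` is isometric. -/
theorem coburn_theorem
    {H : Type*} [NormedAddCommGroup H] [InnerProductSpace ℂ H] [CompleteSpace H]
    (f : HilbertBasis ℕ ℂ H) (T : H →L[ℂ] H)
    (hT : ∀ k : ℕ, T (f k) = f (k + 1))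
    {A : Type*} [NormedRing A] [StarRing A] [CStarRing A] [CompleteSpace A]
    [NormedAlgebra ℂ A] [StarModule ℂ A]
    (v : A) (hv : star v * v = 1) (hnu : v * star v ≠ 1)
    (𝒯 : StarSubalgebra ℂ (H →L[ℂ] H))
    (h𝒯 : 𝒯 = (StarAlgebra.adjoin ℂ ({T} : Set (H →L[ℂ] H))).topologicalClosure)
    (hTmem : T ∈ 𝒯) :
    ∃ φ : 𝒯 →⋆ₐ[ℂ] A,
      φ ⟨T, hTmem⟩ = v ∧ Isometry φ ∧
      ∀ ψ : 𝒯 →⋆ₐ[ℂ] A, ψ ⟨T, hTmem⟩ = v → ψ = φ := by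
  classical
  -- nontriviality
  haveI hnontrivA : Nontrivial A := ⟨⟨v * star v, 1, hnu⟩⟩
  haveI hnontrivH : Nontrivial H := by
    refine ⟨⟨f 0, 0, fun h => ?_⟩⟩
    have h1 := f.orthonormal.1 0
    rw [h] at h1
    simp at h1
  haveI hnontrivB : Nontrivial (H →L[ℂ] H) := by
    refine ⟨⟨1, 0, fun h => ?_⟩⟩
    obtain ⟨x, y, hxy⟩ := hnontrivH
    have h1 : (1 : H →L[ℂ] H) (x - y) = (0 : H →L[ℂ] H) (x - y) := by rw [h]
    simp only [ContinuousLinearMap.one_apply, ContinuousLinearMap.zero_apply, sub_eq_zero] at h1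
    exact hxy h1
  have hTisom : star T * T = 1 := cb_Tisom f T hT
  set L : ((ℕ × ℕ) →₀ ℂ) →ₗ[ℂ] (H →L[ℂ] H) := cbTheta T with hLdef
  set M : ((ℕ × ℕ) →₀ ℂ) →ₗ[ℂ] A := cbTheta v with hMdef
  have hcontract : ∀ c, ‖M c‖ ≤ ‖L c‖ :=
    cb_contract hTisom hv (cb_coef_bound f T hT)
  have hLinj : Function.Injective L := cb_theta_T_inj f T hT
  -- the polynomial star-subalgebra
  have hmul_mem : ∀ a b : H →L[ℂ] H, a ∈ LinearMap.range L → b ∈ LinearMap.range L →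
      a * b ∈ LinearMap.range L := by
    rintro a b ⟨c, rfl⟩ ⟨c', rfl⟩
    exact ⟨cbConv c c', cbTheta_mul hTisom c c'⟩
  have halgmap_mem : ∀ r : ℂ, algebraMap ℂ (H →L[ℂ] H) r ∈ LinearMap.range L := by
    intro r
    refine ⟨Finsupp.single (0, 0) r, ?_⟩
    show cbTheta T (Finsupp.single (0, 0) r) = _
    rw [cbTheta_single, cbMono]
    simp [Algebra.algebraMap_eq_smul_one]
  have hstar_mem : ∀ a : H →L[ℂ] H, a ∈ LinearMap.range L → star a ∈ LinearMap.range L := by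
    rintro a ⟨c, rfl⟩
    exact ⟨cbStar c, cbTheta_star c⟩
  have hT_mem : T ∈ LinearMap.range L := by
    refine ⟨Finsupp.single (1, 0) 1, ?_⟩
    show cbTheta T (Finsupp.single (1, 0) 1) = _
    rw [cbTheta_single, cbMono]
    simp
  let SR : StarSubalgebra ℂ (H →L[ℂ] H) :=
    { carrier := (LinearMap.range L : Set (H →L[ℂ] H))
      mul_mem' := fun {a b} ha hb => hmul_mem a b ha hb
      add_mem' := fun {a b} ha hb => (LinearMap.range L).add_mem ha hb
      algebraMap_mem' := halgmap_mem
      star_mem' := fun {a} ha => hstar_mem a ha }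
  have hadjoin_le : StarAlgebra.adjoin ℂ ({T} : Set (H →L[ℂ] H)) ≤ SR :=
    StarAlgebra.adjoin_le (Set.singleton_subset_iff.mpr (show T ∈ SR from hT_mem))
  -- range L sits inside 𝒯
  have hmono_mem : ∀ p : ℕ × ℕ, cbMono T p ∈ 𝒯 :=
    fun p => mul_mem (pow_mem hTmem p.1) (pow_mem (star_mem hTmem) p.2)
  have hSsub : ∀ x : H →L[ℂ] H, x ∈ LinearMap.range L → x ∈ 𝒯 := by
    rintro x ⟨c, rfl⟩
    show cbTheta T c ∈ 𝒯
    rw [cbTheta_apply, Finsupp.sum]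
    exact sum_mem fun p _hp => SMulMemClass.smul_mem _ (hmono_mem p)
  -- closedness and instances
  have h𝒯closed : IsClosed (𝒯 : Set (H →L[ℂ] H)) := by
    rw [h𝒯]; exact StarSubalgebra.isClosed_topologicalClosure _
  haveI : CompleteSpace ↥𝒯 := h𝒯closed.completeSpace_coe
  letI : CStarAlgebra A := { }
  letI : CStarAlgebra ↥𝒯 := { }
  -- the inclusion of range L into 𝒯
  let eLin : ↥(LinearMap.range L) →ₗ[ℂ] ↥𝒯 :=
    { toFun := fun x => ⟨x.1, hSsub x.1 x.2⟩
      map_add' := fun x y => rfl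
      map_smul' := fun c x => rfl }
  have h_isom : Isometry eLin := AddMonoidHomClass.isometry_of_norm eLin (fun x => rfl)
  let e : ↥(LinearMap.range L) →L[ℂ] ↥𝒯 := ⟨eLin, h_isom.continuous⟩
  have hdense : DenseRange e := by
    rintro ⟨w, hw⟩
    rw [closure_subtype]
    show w ∈ closure (Subtype.val '' Set.range ⇑e)
    have himg : ((StarAlgebra.adjoin ℂ ({T} : Set (H →L[ℂ] H)) : StarSubalgebra ℂ (H →L[ℂ] H)) :
        Set (H →L[ℂ] H)) ⊆ Subtype.val '' Set.range ⇑e := by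
      intro z hz
      have hzS : z ∈ LinearMap.range L := hadjoin_le hz
      exact ⟨e ⟨z, hzS⟩, ⟨⟨z, hzS⟩, rfl⟩, rfl⟩
    have hy : w ∈ closure ((StarAlgebra.adjoin ℂ ({T} : Set (H →L[ℂ] H)) :
        StarSubalgebra ℂ (H →L[ℂ] H)) : Set (H →L[ℂ] H)) := by
      rw [h𝒯] at hw
      rw [← StarSubalgebra.topologicalClosure_coe]
      exact hw
    exact closure_mono himg hy
  -- the densely-defined homomorphism
  let Leq := LinearEquiv.ofInjective L hLinj
  let ψ₀ : ↥(LinearMap.range L) →ₗ[ℂ] A := M.comp (Leq.symm : ↥(LinearMap.range L) →ₗ[ℂ] ((ℕ × ℕ) →₀ ℂ))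
  have hψ₀ : ∀ (x : ↥(LinearMap.range L)) (c), (x : H →L[ℂ] H) = L c → ψ₀ x = M c := by
    intro x c hc
    have hx : x = Leq c := Subtype.ext hc
    rw [hx]
    show M (Leq.symm (Leq c)) = M c
    rw [LinearEquiv.symm_apply_apply]
  have hψ₀bound : ∀ x : ↥(LinearMap.range L), ‖ψ₀ x‖ ≤ 1 * ‖x‖ := by
    intro x
    obtain ⟨c, hc⟩ := x.2
    rw [one_mul, hψ₀ x c hc.symm]
    calc ‖M c‖ ≤ ‖L c‖ := hcontract c
    _ = ‖(x : H →L[ℂ] H)‖ := by rw [hc]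
    _ = ‖x‖ := rfl
  let ψ₀L : ↥(LinearMap.range L) →L[ℂ] A := ψ₀.mkContinuous 1 hψ₀bound
  let φc : ↥𝒯 →L[ℂ] A := ψ₀L.extend e
  -- key computation rule
  have hkey : ∀ (z : ↥𝒯) (c), (z : H →L[ℂ] H) = L c → φc z = M c := by
    intro z c hc
    have hzS : (z : H →L[ℂ] H) ∈ LinearMap.range L := hc ▸ ⟨c, rfl⟩
    have hz : z = e ⟨(z : H →L[ℂ] H), hzS⟩ := Subtype.ext rfl
    rw [hz]
    have h1 : φc (e ⟨(z : H →L[ℂ] H), hzS⟩) = ψ₀L ⟨(z : H →L[ℂ] H), hzS⟩ :=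
      ContinuousLinearMap.extend_eq ψ₀L hdense h_isom.isUniformInducing _
    rw [h1, LinearMap.mkContinuous_apply]
    exact hψ₀ _ c hc
  -- multiplicativity
  have hmulφ : ∀ x y : ↥𝒯, φc (x * y) = φc x * φc y := by
    have hcl : IsClosed {q : ↥𝒯 × ↥𝒯 | φc (q.1 * q.2) = φc q.1 * φc q.2} := by
      apply isClosed_eq
      · exact φc.continuous.comp (continuous_fst.mul continuous_snd)
      · exact (φc.continuous.comp continuous_fst).mul (φc.continuous.comp continuous_snd)
    intro x y
    refine DenseRange.induction_on₂ hdense hcl ?_ x y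
    intro a b
    obtain ⟨c, hc⟩ := a.2
    obtain ⟨c', hc'⟩ := b.2
    have h1 : ((e a * e b : ↥𝒯) : H →L[ℂ] H) = L (cbConv c c') := by
      have : ((e a * e b : ↥𝒯) : H →L[ℂ] H) = (a : H →L[ℂ] H) * (b : H →L[ℂ] H) := rfl
      rw [this, ← hc, ← hc']
      exact (cbTheta_mul hTisom c c').symm
    rw [hkey _ _ h1, hkey (e a) c hc.symm, hkey (e b) c' hc'.symm]
    show cbTheta v (cbConv c c') = cbTheta v c * cbTheta v c'
    exact cbTheta_mul hv c c'
  -- star-preservation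
  have hstarφ : ∀ x : ↥𝒯, φc (star x) = star (φc x) := by
    have hcl : IsClosed {x : ↥𝒯 | φc (star x) = star (φc x)} := by
      apply isClosed_eq
      · exact φc.continuous.comp continuous_star
      · exact continuous_star.comp φc.continuous
    intro x
    refine DenseRange.induction_on hdense x hcl ?_
    intro a
    obtain ⟨c, hc⟩ := a.2
    have h1 : ((star (e a) : ↥𝒯) : H →L[ℂ] H) = L (cbStar c) := by
      have : ((star (e a) : ↥𝒯) : H →L[ℂ] H) = star (a : H →L[ℂ] H) := rfl
      rw [this, ← hc]
      exact (cbTheta_star c).symm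
    rw [hkey _ _ h1, hkey (e a) c hc.symm]
    show cbTheta v (cbStar c) = star (cbTheta v c)
    exact cbTheta_star c
  -- unit
  have honeφ : φc 1 = 1 := by
    have h1 : ((1 : ↥𝒯) : H →L[ℂ] H) = L (Finsupp.single (0, 0) 1) := by
      show (1 : H →L[ℂ] H) = cbTheta T (Finsupp.single (0, 0) 1)
      rw [cbTheta_single, cbMono]
      simp
    rw [hkey 1 _ h1]
    show cbTheta v (Finsupp.single (0, 0) 1) = 1
    rw [cbTheta_single, cbMono]
    simp
  -- assemble the star algebra homomorphism
  let φ : ↥𝒯 →⋆ₐ[ℂ] A :=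
    { toFun := φc
      map_one' := honeφ
      map_mul' := hmulφ
      map_zero' := φc.map_zero
      map_add' := φc.map_add
      commutes' := by
        intro r
        show φc ((algebraMap ℂ ↥𝒯) r) = (algebraMap ℂ A) r
        rw [Algebra.algebraMap_eq_smul_one r, Algebra.algebraMap_eq_smul_one (A := A) r,
          map_smul, honeφ]
      map_star' := hstarφ }
  have hφc : ∀ z : ↥𝒯, φ z = φc z := fun z => rfl
  -- φ sends T to v
  have hφT : φ ⟨T, hTmem⟩ = v := by
    rw [hφc]
    have h1 : ((⟨T, hTmem⟩ : ↥𝒯) : H →L[ℂ] H) = L (Finsupp.single (1, 0) 1) := by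
      show T = cbTheta T (Finsupp.single (1, 0) 1)
      rw [cbTheta_single, cbMono]
      simp
    rw [hkey _ _ h1]
    show cbTheta v (Finsupp.single (1, 0) 1) = v
    rw [cbTheta_single, cbMono]
    simp
  -- matrix coefficients of φ
  have hMC : ∀ (m n : ℕ) (z : ↥𝒯),
      (cbE v * (star v) ^ m) * (φc z * (v ^ n * cbE v)) =
        (inner ℂ (f m) ((z : H →L[ℂ] H) (f n)) : ℂ) • cbE v := by
    intro m n
    have hcl : IsClosed {z : ↥𝒯 |
        (cbE v * (star v) ^ m) * (φc z * (v ^ n * cbE v)) =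
        (inner ℂ (f m) ((z : H →L[ℂ] H) (f n)) : ℂ) • cbE v} := by
      apply isClosed_eq
      · exact continuous_const.mul (φc.continuous.mul continuous_const)
      · have h1 : Continuous fun z : ↥𝒯 => ((z : H →L[ℂ] H) (f n)) :=
          (ContinuousLinearMap.apply ℂ H (f n)).continuous.comp continuous_subtype_val
        exact (Continuous.inner continuous_const h1).smul continuous_const
    intro z
    refine DenseRange.induction_on hdense z hcl ?_
    intro a
    obtain ⟨c, hc⟩ := a.2
    rw [hkey (e a) c hc.symm]
    have hval : ((e a : ↥𝒯) : H →L[ℂ] H) = L c := hc.symm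
    rw [hval]
    show (cbE v * (star v) ^ m) * (cbTheta v c * (v ^ n * cbE v)) =
      (inner ℂ (f m) ((cbTheta T c) (f n)) : ℂ) • cbE v
    rw [cb_Acompress hv c m n, cb_aTheta f T hT]
  -- injectivity of φ
  have hE : cbE v ≠ 0 := by
    rw [cbE, sub_ne_zero]
    exact (Ne.symm hnu)
  have hinj : Function.Injective φ := by
    have hker : ∀ z : ↥𝒯, φc z = 0 → z = 0 := by
      intro z hz
      have hcoef0 : ∀ m n : ℕ, (inner ℂ (f m) ((z : H →L[ℂ] H) (f n)) : ℂ) = 0 := by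
        intro m n
        have h1 := hMC m n z
        rw [hz, zero_mul, mul_zero] at h1
        rcases smul_eq_zero.mp h1.symm with h2 | h2
        · exact h2
        · exact absurd h2 hE
      have hzero : ∀ n, (z : H →L[ℂ] H) (f n) = 0 := by
        intro n
        apply cb_vext f
        intro i
        rw [hcoef0 i n, inner_zero_right]
      have : (z : H →L[ℂ] H) = 0 := by
        apply cb_clm_ext f
        intro i
        rw [hzero i]
        rfl
      exact Subtype.ext this
    intro x y hxy
    have h1 : φc (x - y) = 0 := by
      rw [map_sub, ← hφc x, ← hφc y, hxy, sub_self]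
    have := hker _ h1
    rwa [sub_eq_zero] at this
  -- isometry
  have hisometry : Isometry φ := NonUnitalStarAlgHom.isometry φ hinj
  refine ⟨φ, hφT, hisometry, ?_⟩
  -- uniqueness
  intro ψ hψT
  have hψcont : Continuous ψ :=
    AddMonoidHomClass.continuous_of_bound ψ 1 (fun x => by
      simpa using NonUnitalStarAlgHom.norm_apply_le ψ x)
  have hφcont : Continuous φ := φc.continuous
  have heq : Set.EqOn ⇑ψ ⇑φ (Set.range ⇑e) := by
    rintro _ ⟨a, rfl⟩
    obtain ⟨c, hc⟩ := a.2
    set t : ↥𝒯 := ⟨T, hTmem⟩ with htdef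
    have hsum : e a = c.sum fun p r => r • (t ^ p.1 * (star t) ^ p.2) := by
      apply Subtype.ext
      have h2 : ((c.sum fun p r => r • (t ^ p.1 * (star t) ^ p.2) : ↥𝒯) : H →L[ℂ] H) =
          cbTheta T c := by
        rw [Finsupp.sum, AddSubmonoidClass.coe_finset_sum, cbTheta_apply, Finsupp.sum]
        refine Finset.sum_congr rfl fun p hp => ?_
        simp only [SetLike.val_smul, MulMemClass.coe_mul, SubmonoidClass.coe_pow, cbMono]
        congr 1
      rw [h2]
      exact hc.symm
    have hψs : ψ (e a) = M c := by
      rw [hsum, Finsupp.sum, map_sum]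
      show (∑ p ∈ c.support, ψ (c p • (t ^ p.1 * (star t) ^ p.2))) = cbTheta v c
      rw [cbTheta_apply, Finsupp.sum]
      refine Finset.sum_congr rfl fun p hp => ?_
      rw [map_smul, map_mul, map_pow, map_pow, map_star, hψT]
      rfl
    rw [hψs, hφc, hkey (e a) c hc.symm]
  have : ⇑ψ = ⇑φ := Continuous.ext_on hdense hψcont hφcont heq
  exact DFunLike.ext ψ φ (fun z => congrFun this z)
end

section
/- For continuous functions f, g on S¹, the Toeplitz operators T_f = P M_f P and T_g on the Hardy space H²(S¹) satisfy: T_f T_g - T_{fg} is a compact operator, and T_f is compact if and only if f = 0. -/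
open MeasureTheory AddCircle ContinuousLinearMap Filter
open scoped ENNReal NNReal

set_option maxHeartbeats 2000000

section ToeplitzAux
variable {H : Type*} [NormedAddCommGroup H] [NormedSpace ℂ H]

variable {H : Type*} [NormedAddCommGroup H] [NormedSpace ℂ H]

lemma aux_isCompactOperator_smulRight (φ : H →L[ℂ] ℂ) (y : H) :
    IsCompactOperator ⇑(φ.smulRight y) := by
  rw [isCompactOperator_iff_exists_mem_nhds_image_subset_compact]
  refine ⟨Metric.ball 0 1, Metric.ball_mem_nhds 0 one_pos,
    (fun c : ℂ => c • y) '' Metric.closedBall 0 ‖φ‖,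
    (isCompact_closedBall 0 _).image (continuous_id.smul continuous_const), ?_⟩
  rintro _ ⟨x, hx, rfl⟩
  refine ⟨φ x, ?_, by simp⟩
  rw [Metric.mem_closedBall, dist_zero_right]
  calc ‖φ x‖ ≤ ‖φ‖ * ‖x‖ := φ.le_opNorm x
  _ ≤ ‖φ‖ * 1 := by
      have := Metric.mem_ball.1 hx
      rw [dist_zero_right] at this
      exact mul_le_mul_of_nonneg_left this.le (norm_nonneg _)
  _ = ‖φ‖ := mul_one _

lemma aux_isCompactOperator_sum {ι : Type*} (s : Finset ι) (F : ι → H →L[ℂ] H)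
    (h : ∀ i ∈ s, IsCompactOperator ⇑(F i)) : IsCompactOperator ⇑(∑ i ∈ s, F i) := by
  classical
  induction s using Finset.induction with
  | empty => simpa using isCompactOperator_zero
  | insert _ _ hnot ih =>
      rename_i a s
      rw [Finset.sum_insert hnot]
      have hco : ⇑(F a + ∑ x ∈ s, F x) = ⇑(F a) + ⇑(∑ x ∈ s, F x) := rfl
      rw [hco]
      exact (h a (Finset.mem_insert_self a s)).add
        (ih fun i hi => h i (Finset.mem_insert_of_mem hi))

end ToeplitzAux

section ToeplitzMain

local notation "⟪" x ", " y "⟫" => @inner ℂ _ _ x y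

/-- For continuous functions `f, g` on the circle, the Toeplitz operators
`T_f = P M_f P` on the Hardy space (realised via the Hardy projection `P` of `L²(S¹)`
onto the closed span of the nonnegative Fourier modes, with `M_f` the multiplication
operator by `f`) satisfy: `T_f T_g - T_{fg}` is compact, and `T_f` is compact iff
`f = 0`. -/
theorem toeplitz_operators_hardy
    [hT : Fact (0 < 2 * Real.pi)]
    (M : C(AddCircle (2 * Real.pi), ℂ) →
      Lp ℂ 2 (@haarAddCircle (2 * Real.pi) hT) →L[ℂ] Lp ℂ 2 (@haarAddCircle (2 * Real.pi) hT))
    (hM : ∀ (f : C(AddCircle (2 * Real.pi), ℂ)) (u : Lp ℂ 2 (@haarAddCircle (2 * Real.pi) hT)),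
      (M f u : AddCircle (2 * Real.pi) → ℂ) =ᵐ[haarAddCircle] fun z => f z * u z)
    (P : Lp ℂ 2 (@haarAddCircle (2 * Real.pi) hT) →L[ℂ] Lp ℂ 2 (@haarAddCircle (2 * Real.pi) hT))
    (hPsa : IsSelfAdjoint P) (hPidem : IsIdempotentElem P)
    (hPrange : LinearMap.range P.toLinearMap =
      (Submodule.span ℂ (Set.range fun n : ℕ => @fourierLp (2 * Real.pi) hT 2 _ (n : ℤ))).topologicalClosure)
    (f g : C(AddCircle (2 * Real.pi), ℂ)) :
    IsCompactOperator ⇑(P * M f * P * (P * M g * P) - P * M (f * g) * P) ∧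
    (IsCompactOperator ⇑(P * M f * P) ↔ f = 0) := by
  -- multiplicativity
  have hM_mul : ∀ a b : C(AddCircle (2 * Real.pi), ℂ), M (a * b) = M a * M b := by
    intro a b
    ext u
    rw [show (M a * M b) u = M a (M b u) from rfl]
    filter_upwards [hM (a * b) u, hM a (M b u), hM b u] with z h1 h2 h3
    rw [h1, h2, h3, ContinuousMap.mul_apply]
    ring
  have hM_add : ∀ a b : C(AddCircle (2 * Real.pi), ℂ), M (a + b) = M a + M b := by
    intro a b
    ext u
    rw [show (M a + M b) u = M a u + M b u from rfl]
    filter_upwards [hM (a + b) u, hM a u, hM b u, Lp.coeFn_add (M a u) (M b u)] with z h1 h2 h3 h4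
    rw [h1, h4, Pi.add_apply, h2, h3, ContinuousMap.add_apply]
    ring
  have hM_zero : M 0 = 0 := by
    ext u
    rw [show (0 : Lp ℂ 2 (@haarAddCircle (2 * Real.pi) hT) →L[ℂ] Lp ℂ 2 (@haarAddCircle (2 * Real.pi) hT)) u = 0 from rfl]
    filter_upwards [hM 0 u, Lp.coeFn_zero ℂ 2 haarAddCircle] with z h1 h2
    rw [h1, h2]
    simp
  have hM_smul : ∀ (c : ℂ) (a : C(AddCircle (2 * Real.pi), ℂ)), M (c • a) = c • M a := by
    intro c a
    ext u
    rw [show (c • M a) u = c • (M a u) from rfl]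
    filter_upwards [hM (c • a) u, hM a u, Lp.coeFn_smul c (M a u)] with z h1 h2 h3
    rw [h1, h3, Pi.smul_apply, h2]
    simp [smul_eq_mul, mul_assoc]
  -- norm bound
  have hM_norm : ∀ (a : C(AddCircle (2 * Real.pi), ℂ)) (u : (Lp ℂ 2 (@haarAddCircle (2 * Real.pi) hT))), ‖M a u‖ ≤ ‖a‖ * ‖u‖ := by
    intro a u
    rw [Lp.norm_def, Lp.norm_def]
    rw [eLpNorm_congr_ae (hM a u)]
    have hb : eLpNorm (fun z => a z * u z) 2 haarAddCircle ≤ ‖a‖₊ • eLpNorm u 2 haarAddCircle := by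
      apply eLpNorm_le_nnreal_smul_eLpNorm_of_ae_le_mul
      · filter_upwards with z
        rw [nnnorm_mul]
        refine mul_le_mul_left ?_ _
        exact_mod_cast a.norm_coe_le_norm z
    calc (eLpNorm (fun z => a z * u z) 2 haarAddCircle).toReal
        ≤ ((‖a‖₊ : ℝ≥0∞) * eLpNorm u 2 haarAddCircle).toReal := by
          apply ENNReal.toReal_mono
          · exact ENNReal.mul_ne_top ENNReal.coe_ne_top (Lp.eLpNorm_ne_top u)
          · simpa [ENNReal.smul_def, smul_eq_mul] using hb
      _ = ‖a‖ * (eLpNorm u 2 haarAddCircle).toReal := by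
          rw [ENNReal.toReal_mul]
          simp
  set eL : ℤ → (Lp ℂ 2 (@haarAddCircle (2 * Real.pi) hT)) := fun n => @fourierLp (2 * Real.pi) hT 2 _ n with heL
  have hON : Orthonormal ℂ eL := @orthonormal_fourier (2 * Real.pi) hT
  have hON' : ∀ i j : ℤ, ⟪eL i, eL j⟫ = if i = j then (1 : ℂ) else 0 :=
    orthonormal_iff_ite.mp hON
  -- P fixes range elements
  have hPfix : ∀ x : (Lp ℂ 2 (@haarAddCircle (2 * Real.pi) hT)), x ∈ LinearMap.range P.toLinearMap → P x = x := by
    rintro x ⟨y, rfl⟩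
    have := ContinuousLinearMap.ext_iff.1 hPidem y
    simpa [ContinuousLinearMap.mul_apply] using this
  -- P fixes nonnegative modes
  have hPpos : ∀ n : ℤ, 0 ≤ n → P (eL n) = eL n := by
    intro n hn
    apply hPfix
    rw [hPrange]
    apply Submodule.le_topologicalClosure
    apply Submodule.subset_span
    exact ⟨n.toNat, by simp [heL, Int.toNat_of_nonneg hn]⟩
  -- adjoint fact
  have hPadj : P.adjoint = P := by
    rw [← ContinuousLinearMap.star_eq_adjoint]; exact hPsa
  have hPinner : ∀ x y : (Lp ℂ 2 (@haarAddCircle (2 * Real.pi) hT)), ⟪P x, y⟫ = ⟪x, P y⟫ := by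
    intro x y
    conv_lhs => rw [← hPadj]
    rw [ContinuousLinearMap.adjoint_inner_left]
  -- P kills negative modes
  have hPneg : ∀ n : ℤ, n < 0 → P (eL n) = 0 := by
    intro n hn
    have horth : ∀ y ∈ LinearMap.range P.toLinearMap, ⟪eL n, y⟫ = 0 := by
      intro y hy
      rw [hPrange] at hy
      have hker : (Submodule.span ℂ (Set.range fun m : ℕ =>
          @fourierLp (2 * Real.pi) hT 2 _ (m : ℤ))).topologicalClosure ≤
          LinearMap.ker (innerSL ℂ (eL n)).toLinearMap := by
        apply Submodule.topologicalClosure_minimal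
        · rw [Submodule.span_le]
          rintro _ ⟨m, rfl⟩
          simp only [SetLike.mem_coe, LinearMap.mem_ker]
          have : ⟪eL n, eL (m : ℤ)⟫ = 0 := by
            rw [hON']
            have : n ≠ (m : ℤ) := by omega
            simp [this]
          simpa [innerSL_apply_apply] using this
        · exact ContinuousLinearMap.isClosed_ker (innerSL ℂ (eL n))
      have := hker hy
      simpa [LinearMap.mem_ker, innerSL_apply_apply] using this
    have h0 : ⟪P (eL n), P (eL n)⟫ = 0 := by
      rw [hPinner]
      exact horth _ ⟨P (eL n), rfl⟩
    exact inner_self_eq_zero.mp h0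
  -- multiplication by fourier shifts modes
  have hMshift : ∀ k n : ℤ, M (fourier k) (eL n) = eL (k + n) := by
    intro k n
    apply Lp.ext (p := (2 : ℝ≥0∞)) (μ := haarAddCircle)
    filter_upwards [hM (fourier k) (eL n), coeFn_fourierLp 2 n, coeFn_fourierLp 2 (k + n)]
      with z h1 h2 h3
    rw [h1, heL] at *
    rw [h2, h3, ← fourier_add]
  -- Hankel operator of a Fourier monomial is compact
  have hHankelMono : ∀ k : ℤ, IsCompactOperator ⇑((1 - P) * M (fourier k) * P) := by
    intro k
    set d : ℕ := (-k).toNat with hd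
    set G : (Lp ℂ 2 (@haarAddCircle (2 * Real.pi) hT)) →L[ℂ] (Lp ℂ 2 (@haarAddCircle (2 * Real.pi) hT)) :=
      ∑ j ∈ Finset.range d, ((innerSL ℂ (eL (j : ℤ))).smulRight (eL ((j : ℤ) + k))) with hG
    have hGc : IsCompactOperator ⇑G :=
      aux_isCompactOperator_sum _ _ (fun j _ => aux_isCompactOperator_smulRight _ _)
    have hdense : Dense ((Submodule.span ℂ (Set.range eL) : Submodule ℂ (Lp ℂ 2 (@haarAddCircle (2 * Real.pi) hT))) : Set (Lp ℂ 2 (@haarAddCircle (2 * Real.pi) hT))) := by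
      rw [Submodule.dense_iff_topologicalClosure_eq_top]
      exact span_fourierLp_closure_eq_top (by norm_num)
    have heq : (1 - P) * M (fourier k) * P = G := by
      apply ContinuousLinearMap.ext_on hdense
      rintro _ ⟨n, rfl⟩
      have hGapp : G (eL n) = ∑ j ∈ Finset.range d, ⟪eL (j : ℤ), eL n⟫ • eL ((j : ℤ) + k) := by
        rw [hG]
        simp [ContinuousLinearMap.sum_apply, ContinuousLinearMap.smulRight_apply,
          innerSL_apply_apply]
      have happ : ((1 - P) * M (fourier k) * P) (eL n) = (1 - P) (M (fourier k) (P (eL n))) := rfl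
      rw [happ, hGapp]
      rcases le_or_gt 0 n with hn | hn
      · rw [hPpos n hn, hMshift k n]
        rcases le_or_gt 0 (k + n) with hkn | hkn
        · have hz : (1 - P) (eL (k + n)) = 0 := by
            rw [ContinuousLinearMap.sub_apply, ContinuousLinearMap.one_apply,
              hPpos _ hkn, sub_self]
          rw [hz]
          symm
          apply Finset.sum_eq_zero
          intro j hj
          by_cases hje : (j : ℤ) = n
          · exfalso
            have h1 : (j : ℤ) < ((-k).toNat : ℤ) := by
              exact_mod_cast Finset.mem_range.mp hj
            have h2 : ((-k).toNat : ℤ) = max (-k) 0 := Int.toNat_eq_max (-k)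
            omega
          · rw [hON', if_neg hje, zero_smul]
        · rw [ContinuousLinearMap.sub_apply, ContinuousLinearMap.one_apply,
            hPneg _ hkn, sub_zero]
          symm
          have hmem : n.toNat ∈ Finset.range d := by
            rw [Finset.mem_range, hd]
            omega
          rw [Finset.sum_eq_single_of_mem n.toNat hmem]
          · rw [Int.toNat_of_nonneg hn, hON', if_pos rfl, one_smul, add_comm]
          · intro j hj hjne
            have hje : (j : ℤ) ≠ n := by omega
            rw [hON', if_neg hje, zero_smul]
      · rw [hPneg n hn, map_zero, map_zero]
        symm
        apply Finset.sum_eq_zero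
        intro j hj
        have hje : (j : ℤ) ≠ n := by omega
        rw [hON', if_neg hje, zero_smul]
    rw [heq]
    exact hGc
  have hHankel : ∀ a : C(AddCircle (2 * Real.pi), ℂ),
      IsCompactOperator ⇑((1 - P) * M a * P) := by
    have hMnorm' : ∀ a : C(AddCircle (2 * Real.pi), ℂ), ‖M a‖ ≤ ‖a‖ := fun a =>
      ContinuousLinearMap.opNorm_le_bound _ (norm_nonneg a) (hM_norm a)
    let Φlin : C(AddCircle (2 * Real.pi), ℂ) →ₗ[ℂ] ((Lp ℂ 2 (@haarAddCircle (2 * Real.pi) hT)) →L[ℂ] (Lp ℂ 2 (@haarAddCircle (2 * Real.pi) hT))) :=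
      { toFun := fun a => (1 - P) * M a * P
        map_add' := fun a b => by show (1 - P) * M (a + b) * P = _; rw [hM_add, mul_add, add_mul]
        map_smul' := fun c a => by
          show (1 - P) * M (c • a) * P = _
          rw [hM_smul]
          simp only [RingHom.id_apply]
          rw [mul_smul_comm, smul_mul_assoc] }
    have hbound : ∀ a, ‖Φlin a‖ ≤ (‖(1 : (Lp ℂ 2 (@haarAddCircle (2 * Real.pi) hT)) →L[ℂ] (Lp ℂ 2 (@haarAddCircle (2 * Real.pi) hT))) - P‖ * ‖P‖) * ‖a‖ := by
      intro a
      calc ‖(1 - P) * M a * P‖ ≤ ‖(1 - P) * M a‖ * ‖P‖ := ContinuousLinearMap.opNorm_comp_le _ _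
      _ ≤ ‖(1 : (Lp ℂ 2 (@haarAddCircle (2 * Real.pi) hT)) →L[ℂ] (Lp ℂ 2 (@haarAddCircle (2 * Real.pi) hT))) - P‖ * ‖M a‖ * ‖P‖ :=
          mul_le_mul_of_nonneg_right (ContinuousLinearMap.opNorm_comp_le _ _) (norm_nonneg _)
      _ ≤ ‖(1 : (Lp ℂ 2 (@haarAddCircle (2 * Real.pi) hT)) →L[ℂ] (Lp ℂ 2 (@haarAddCircle (2 * Real.pi) hT))) - P‖ * ‖a‖ * ‖P‖ :=
          mul_le_mul_of_nonneg_right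
            (mul_le_mul_of_nonneg_left (hMnorm' a) (norm_nonneg _)) (norm_nonneg _)
      _ = (‖(1 : (Lp ℂ 2 (@haarAddCircle (2 * Real.pi) hT)) →L[ℂ] (Lp ℂ 2 (@haarAddCircle (2 * Real.pi) hT))) - P‖ * ‖P‖) * ‖a‖ := by ring
    let Φ := Φlin.mkContinuous _ hbound
    let S : Submodule ℂ C(AddCircle (2 * Real.pi), ℂ) :=
      { carrier := {a | IsCompactOperator ⇑((1 - P) * M a * P)}
        add_mem' := by
          intro a b ha hb
          simp only [Set.mem_setOf_eq] at *
          rw [hM_add, mul_add, add_mul]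
          have hco : ⇑((1 - P) * M a * P + (1 - P) * M b * P)
              = ⇑((1 - P) * M a * P) + ⇑((1 - P) * M b * P) := rfl
          rw [hco]
          exact ha.add hb
        zero_mem' := by
          simp only [Set.mem_setOf_eq]
          rw [hM_zero, mul_zero, zero_mul]
          have hco : ⇑(0 : Lp ℂ 2 (@haarAddCircle (2 * Real.pi) hT) →L[ℂ] Lp ℂ 2 (@haarAddCircle (2 * Real.pi) hT)) = fun _ => (0 : Lp ℂ 2 (@haarAddCircle (2 * Real.pi) hT)) := rfl
          rw [hco]
          exact isCompactOperator_zero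
        smul_mem' := by
          intro c a ha
          simp only [Set.mem_setOf_eq] at *
          rw [hM_smul, mul_smul_comm, smul_mul_assoc]
          have hco : ⇑(c • ((1 - P) * M a * P)) = c • ⇑((1 - P) * M a * P) := rfl
          rw [hco]
          exact ha.smul c }
    have hclosed : IsClosed (S : Set C(AddCircle (2 * Real.pi), ℂ)) := by
      have hset : (S : Set C(AddCircle (2 * Real.pi), ℂ))
          = ⇑Φ ⁻¹' {T : (Lp ℂ 2 (@haarAddCircle (2 * Real.pi) hT)) →L[ℂ] (Lp ℂ 2 (@haarAddCircle (2 * Real.pi) hT)) | IsCompactOperator ⇑T} := rfl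
      rw [hset]
      exact isClosed_setOf_isCompactOperator.preimage Φ.continuous
    have hle : Submodule.span ℂ (Set.range (@fourier (2 * Real.pi))) ≤ S := by
      rw [Submodule.span_le]
      rintro _ ⟨k, rfl⟩
      exact hHankelMono k
    have htop : (⊤ : Submodule ℂ C(AddCircle (2 * Real.pi), ℂ)) ≤ S := by
      rw [← span_fourier_closure_eq_top]
      exact Submodule.topologicalClosure_minimal _ hle hclosed
    exact fun a => htop Submodule.mem_top

  have key : P * M f * P * (P * M g * P) - P * M (f * g) * P
      = -((P * M f) * ((1 - P) * M g * P)) := by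
    rw [hM_mul f g]
    have h : P * P = P := hPidem
    calc P * M f * P * (P * M g * P) - P * (M f * M g) * P
        = P * M f * (P * P) * (M g * P) - P * (M f * M g) * P := by noncomm_ring
      _ = P * M f * P * (M g * P) - P * (M f * M g) * P := by rw [h]
      _ = -((P * M f) * ((1 - P) * M g * P)) := by noncomm_ring
  constructor
  · rw [key]
    have hc := hHankel g
    have hcomp : IsCompactOperator (⇑(P * M f) ∘ ⇑((1 - P) * M g * P)) :=
      hc.continuous_comp (P * M f).continuous
    have hco : ⇑(-((P * M f) * ((1 - P) * M g * P)))
        = -(⇑(P * M f) ∘ ⇑((1 - P) * M g * P)) := rfl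
    rw [hco]
    exact hcomp.neg
  · constructor
    · intro hK
      have hnorm1 : ∀ n : ℤ, ‖eL n‖ = 1 := hON.1
      set K : (Lp ℂ 2 (@haarAddCircle (2 * Real.pi) hT)) →L[ℂ] (Lp ℂ 2 (@haarAddCircle (2 * Real.pi) hT)) := P * M f * P with hKdef
      -- matrix coefficient formula
      have hcoef : ∀ k n : ℤ, 0 ≤ n → 0 ≤ k + n →
          fourierCoeff (⇑f) k = ⟪eL (k + n), K (eL n)⟫ := by
        intro k n hn hkn
        have h1 : K (eL n) = P (M f (eL n)) := by
          show P (M f (P (eL n))) = P (M f (eL n))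
          rw [hPpos n hn]
        rw [h1, ← hPinner, hPpos _ hkn]
        rw [MeasureTheory.L2.inner_def, fourierCoeff]
        refine integral_congr_ae ?_
        filter_upwards [coeFn_fourierLp 2 (k + n), coeFn_fourierLp 2 n, hM f (eL n)]
          with z h2 h3 h4
        rw [RCLike.inner_apply, h2, h4, h3, smul_eq_mul, ← fourier_neg, mul_comm (f z),
          mul_comm _ ((fourier (-(k + n))) z), ← mul_assoc, ← fourier_add, show (-(k + n)) + n = -k by ring]
      -- weak convergence of K e_n to 0
      have hweak : ∀ w : (Lp ℂ 2 (@haarAddCircle (2 * Real.pi) hT)), Tendsto (fun n : ℕ => ⟪w, K (eL (n : ℤ))⟫) atTop (nhds 0) := by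
        intro w
        set v : (Lp ℂ 2 (@haarAddCircle (2 * Real.pi) hT)) := ContinuousLinearMap.adjoint K w with hv
        have hrepr : ∀ i : ℤ, (@fourierBasis (2 * Real.pi) hT).repr v i = ⟪eL i, v⟫ := by
          intro i
          rw [fourierBasis.repr_apply_apply, coe_fourierBasis]
        have hsum : Summable (fun i : ℤ => ‖fourierBasis.repr v i‖ ^ (2 : ℝ)) := by
          have := lp.memℓp (fourierBasis.repr v)
          rw [memℓp_gen_iff (by norm_num : (0:ℝ) < (2 : ℝ≥0∞).toReal)] at this
          simpa using this
        have h0 : Tendsto (fun i : ℤ => ‖fourierBasis.repr v i‖ ^ (2 : ℝ)) cofinite (nhds 0) :=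
          hsum.tendsto_cofinite_zero
        have h1 : Tendsto (fun i : ℤ => ‖fourierBasis.repr v i‖) cofinite (nhds 0) := by
          have hkey : ∀ x : ℝ, 0 ≤ x → Real.sqrt (x ^ (2 : ℝ)) = x := fun x hx => by
            rw [show (2:ℝ) = ((2:ℕ):ℝ) by norm_num, Real.rpow_natCast, Real.sqrt_sq hx]
          have := (Real.continuous_sqrt.tendsto 0).comp h0
          rw [Real.sqrt_zero] at this
          refine this.congr fun i => ?_
          simp only [Function.comp_apply]
          exact hkey _ (norm_nonneg _)
        have h2 : Tendsto (fun i : ℤ => fourierBasis.repr v i) cofinite (nhds 0) :=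
          tendsto_zero_iff_norm_tendsto_zero.mpr h1
        have hcast : Tendsto (fun n : ℕ => (n : ℤ)) atTop cofinite :=
          tendsto_natCast_atTop_atTop.mono_right (Int.cofinite_eq ▸ le_sup_right)
        have h3 : Tendsto (fun n : ℕ => fourierBasis.repr v (n : ℤ)) atTop (nhds 0) :=
          h2.comp hcast
        have h4 : Tendsto (fun n : ℕ => (starRingEnd ℂ) (fourierBasis.repr v (n : ℤ)))
            atTop (nhds 0) := by
          have hc := (continuous_star.tendsto (0 : ℂ)).comp h3
          rw [star_zero] at hc
          exact hc
        refine h4.congr fun n => ?_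
        rw [hrepr, inner_conj_symm, hv, ContinuousLinearMap.adjoint_inner_left]
      -- norm convergence of K e_n to 0
      have hlimK : Tendsto (fun n : ℕ => K (eL (n : ℤ))) atTop (nhds 0) := by
        obtain ⟨C, hCcomp, hCnhds⟩ := hK
        obtain ⟨ε, hε, hball⟩ := Metric.mem_nhds_iff.mp hCnhds
        set c : ℂ := ((ε / 2 : ℝ) : ℂ) with hc
        have hc0 : c ≠ 0 := by
          simp only [hc, ne_eq, Complex.ofReal_eq_zero]
          positivity
        have hmemC : ∀ n : ℤ, c • K (eL n) ∈ C := by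
          intro n
          have hmb : c • eL n ∈ Metric.ball (0 : Lp ℂ 2 (@haarAddCircle (2 * Real.pi) hT)) ε := by
            rw [mem_ball_zero_iff, norm_smul, hnorm1, mul_one]
            rw [hc, Complex.norm_real, Real.norm_eq_abs, abs_of_pos (by positivity)]
            linarith
          have hin := hball hmb
          rw [Set.mem_preimage, K.map_smul] at hin
          exact hin
        set C' : Set (Lp ℂ 2 (@haarAddCircle (2 * Real.pi) hT)) := (fun y => c⁻¹ • y) '' C with hC'
        have hC'comp : IsCompact C' := hCcomp.image (continuous_const_smul _)
        have hmem : ∀ n : ℤ, K (eL n) ∈ C' :=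
          fun n => ⟨c • K (eL n), hmemC n, inv_smul_smul₀ hc0 _⟩
        apply tendsto_of_subseq_tendsto
        intro ns hns
        obtain ⟨y, hyC', φ, hφ, hφtend⟩ := hC'comp.tendsto_subseq (fun j => hmem ((ns j : ℕ) : ℤ))
        have hy0 : y = 0 := by
          have h1 : ∀ w : (Lp ℂ 2 (@haarAddCircle (2 * Real.pi) hT)), ⟪w, y⟫ = (0 : ℂ) := by
            intro w
            have ha : Tendsto (fun j => ⟪w, K (eL ((ns (φ j) : ℕ) : ℤ))⟫) atTop (nhds ⟪w, y⟫) :=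
              tendsto_const_nhds.inner hφtend
            have hb : Tendsto (fun j => ⟪w, K (eL ((ns (φ j) : ℕ) : ℤ))⟫) atTop (nhds 0) :=
              (hweak w).comp (hns.comp hφ.tendsto_atTop)
            exact tendsto_nhds_unique ha hb
          have := h1 y
          rwa [inner_self_eq_zero] at this
        exact ⟨φ, hy0 ▸ hφtend⟩
      -- all Fourier coefficients vanish
      have hcoeff0 : ∀ k : ℤ, fourierCoeff (⇑f) k = 0 := by
        intro k
        have hlimnorm : Tendsto (fun n : ℕ => ‖K (eL (n : ℤ))‖) atTop (nhds 0) :=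
          tendsto_zero_iff_norm_tendsto_zero.mp hlimK
        have hbnd : ∀ᶠ n : ℕ in atTop, ‖fourierCoeff (⇑f) k‖ ≤ ‖K (eL (n : ℤ))‖ := by
          filter_upwards [eventually_ge_atTop k.natAbs] with n hn
          have hn0 : 0 ≤ (n : ℤ) := Int.natCast_nonneg n
          have hkn : 0 ≤ k + (n : ℤ) := by omega
          rw [hcoef k n hn0 hkn]
          calc ‖⟪eL (k + n), K (eL n)⟫‖ ≤ ‖eL (k + n)‖ * ‖K (eL n)‖ := norm_inner_le_norm _ _
          _ = ‖K (eL (n : ℤ))‖ := by rw [hnorm1, one_mul]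
        have hle : ‖fourierCoeff (⇑f) k‖ ≤ 0 := ge_of_tendsto hlimnorm hbnd
        exact norm_le_zero_iff.mp hle
      -- conclude f = 0
      set F : Lp ℂ 2 (@haarAddCircle (2 * Real.pi) hT) :=
        ContinuousMap.toLp 2 haarAddCircle ℂ f with hF
      have hFcoeff : ∀ k : ℤ, (@fourierBasis (2 * Real.pi) hT).repr F k = 0 := by
        intro k
        rw [fourierBasis_repr]
        rw [← hcoeff0 k]
        unfold fourierCoeff
        refine integral_congr_ae ?_
        filter_upwards [ContinuousMap.coeFn_toLp (p := (2 : ℝ≥0∞)) (𝕜 := ℂ) haarAddCircle f]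
          with z hz
        rw [show (F : AddCircle (2 * Real.pi) → ℂ) z = ((ContinuousMap.toLp 2 haarAddCircle ℂ) f : AddCircle (2 * Real.pi) → ℂ) z from rfl, hz]
      have hF0 : F = 0 := by
        apply fourierBasis.repr.injective
        rw [map_zero]
        apply lp.ext
        funext k
        simp [hFcoeff k]
      have hfae : ⇑f =ᵐ[@haarAddCircle (2 * Real.pi) hT] 0 := by
        have h1 : ⇑f =ᵐ[@haarAddCircle (2 * Real.pi) hT] ⇑F :=
          (ContinuousMap.coeFn_toLp (p := (2 : ℝ≥0∞)) (𝕜 := ℂ) haarAddCircle f).symm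
        have h2 : (F : AddCircle (2 * Real.pi) → ℂ) =ᵐ[@haarAddCircle (2 * Real.pi) hT] 0 := by
          rw [hF0]
          exact Lp.coeFn_zero ℂ 2 haarAddCircle
        exact h1.trans h2
      have hfeq : ⇑f = (0 : AddCircle (2 * Real.pi) → ℂ) :=
        (Continuous.ae_eq_iff_eq (@haarAddCircle (2 * Real.pi) hT) f.continuous
          continuous_const).mp hfae
      ext z
      exact congrFun hfeq z

    · intro hf0
      subst hf0
      rw [hM_zero, mul_zero, zero_mul]
      have hco : ⇑(0 : Lp ℂ 2 (@haarAddCircle (2 * Real.pi) hT) →L[ℂ]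
          Lp ℂ 2 (@haarAddCircle (2 * Real.pi) hT))
          = fun _ => (0 : Lp ℂ 2 (@haarAddCircle (2 * Real.pi) hT)) := rfl
      rw [hco]
      exact isCompactOperator_zero

end ToeplitzMain
end

section
/- Let X be a Hilbert B-module, Y a Hilbert B-module with a *-homomorphism π : A → End*_B(Y), v : X → Y an adjointable isometry (v*v = 1), and ℓ(a) := v*π(a)v a completely positive splitting such that ℓ(a)ℓ(a*) - ℓ(aa*) ∈ K(X) for all a ∈ A. Then with F := 2vv* - 1, one has F = F*, F² = 1, and [F, π(a)] ∈ K(Y) for all a ∈ A, i.e., (Y, F) is an odd Kasparov (A,B)-module. -/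
section Aux

variable {M : Type*} [NormedRing M] [StarRing M] [CStarRing M] [CompleteSpace M]
    [NormedAlgebra ℂ M] [StarModule ℂ M]

lemma aux_bound {δ t : ℝ} (hδ : 0 < δ) (ht : 0 ≤ t) :
    ‖δ * (t + δ)⁻¹ * t * (δ * (t + δ)⁻¹)‖ ≤ δ := by
  have hs : 0 < t + δ := by linarith
  rw [Real.norm_eq_abs, abs_of_nonneg (by positivity),
    show δ * (t + δ)⁻¹ * t * (δ * (t + δ)⁻¹) = δ ^ 2 * t / (t + δ) ^ 2 by field_simp,
    div_le_iff₀ (by positivity)]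
  nlinarith [mul_nonneg hδ.le (sq_nonneg t), mul_nonneg (mul_nonneg hδ.le hδ.le) ht,
    mul_nonneg (mul_nonneg hδ.le hδ.le) hδ.le]

lemma mem_of_star_mul_self_mem
    (K : Submodule ℂ M) (hKclosed : IsClosed (K : Set M))
    (hKleft : ∀ (x k : M), k ∈ K → x * k ∈ K)
    (hKright : ∀ (x k : M), k ∈ K → k * x ∈ K)
    (x : M) (hx : star x * x ∈ K) : x ∈ K := by
  letI : CStarAlgebra M := {}
  have hsa : IsSelfAdjoint (star x * x) := IsSelfAdjoint.star_mul_self x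
  set h := star x * x with hh
  have hspec : ∀ t ∈ spectrum ℝ h, 0 ≤ t := spectrum_star_mul_self_nonneg
  suffices hcl : x ∈ closure (K : Set M) by rwa [hKclosed.closure_eq] at hcl
  rw [Metric.mem_closure_iff]
  intro ε hε
  set δ : ℝ := ε ^ 2 / 2 with hδdef
  have hδ : 0 < δ := by positivity
  have hne : ∀ t ∈ spectrum ℝ h, t + δ ≠ 0 := fun t ht => by
    have := hspec t ht; positivity
  have hcont : ContinuousOn (fun t : ℝ => (t + δ)⁻¹) (spectrum ℝ h) :=
    ContinuousOn.inv₀ (by fun_prop) hne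
  have hcontδ : ContinuousOn (fun t : ℝ => δ * (t + δ)⁻¹) (spectrum ℝ h) :=
    ContinuousOn.mul continuousOn_const hcont
  set c := cfc (fun t : ℝ => (t + δ)⁻¹) h with hcdef
  refine ⟨x * (h * c), hKleft _ _ (hKright _ _ hx), ?_⟩
  set r := cfc (fun t : ℝ => δ * (t + δ)⁻¹) h with hrdef
  have hrsa : IsSelfAdjoint r := cfc_predicate _ h
  have hr : (1 : M) - h * c = r := by
    have h1 : h * c = cfc (fun t : ℝ => t * (t + δ)⁻¹) h := by
      conv_lhs => rw [← cfc_id' ℝ h]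
      rw [← cfc_mul _ _ h (by fun_prop) hcont]
    rw [h1, ← cfc_one ℝ h, ← cfc_sub (1 : ℝ → ℝ) (fun t : ℝ => t * (t + δ)⁻¹) h (by fun_prop)
      (ContinuousOn.mul (f := fun t : ℝ => t) (by fun_prop) hcont)]
    exact cfc_congr fun t ht => by
      have := hne t ht
      field_simp
      change (1 : ℝ) * (t + δ) - t = δ
      ring
  have hxr : x - x * (h * c) = x * r := by rw [← hr]; noncomm_ring
  have hkey : star (x * r) * (x * r) = cfc
      (fun t : ℝ => δ * (t + δ)⁻¹ * t * (δ * (t + δ)⁻¹)) h := by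
    have e1 : star (x * r) * (x * r) = r * h * r := by
      rw [star_mul, hrsa.star_eq, hh]; noncomm_ring
    rw [e1, cfc_mul (fun t : ℝ => δ * (t + δ)⁻¹ * t) (fun t : ℝ => δ * (t + δ)⁻¹) h
        (ContinuousOn.mul (g := fun t : ℝ => t) hcontδ (by fun_prop)) hcontδ,
      cfc_mul (fun t : ℝ => δ * (t + δ)⁻¹) (fun t : ℝ => t) h hcontδ (by fun_prop), cfc_id' ℝ h]
  have hnorm : ‖x * r‖ * ‖x * r‖ ≤ δ := by
    rw [← CStarRing.norm_star_mul_self, hkey]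
    exact norm_cfc_le hδ.le fun t ht => aux_bound hδ (hspec t ht)
  rw [dist_eq_norm, hxr]
  nlinarith [norm_nonneg (x * r)]

lemma mem_of_mul_star_self_mem
    (K : Submodule ℂ M) (hKclosed : IsClosed (K : Set M))
    (hKleft : ∀ (x k : M), k ∈ K → x * k ∈ K)
    (hKright : ∀ (x k : M), k ∈ K → k * x ∈ K)
    (x : M) (hx : x * star x ∈ K) : x ∈ K := by
  letI : CStarAlgebra M := {}
  have hsa : IsSelfAdjoint (x * star x) := IsSelfAdjoint.mul_star_self x
  set h := x * star x with hh
  have hspec : ∀ t ∈ spectrum ℝ h, 0 ≤ t := by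
    have := spectrum_star_mul_self_nonneg (b := star x)
    rwa [star_star] at this
  suffices hcl : x ∈ closure (K : Set M) by rwa [hKclosed.closure_eq] at hcl
  rw [Metric.mem_closure_iff]
  intro ε hε
  set δ : ℝ := ε ^ 2 / 2 with hδdef
  have hδ : 0 < δ := by positivity
  have hne : ∀ t ∈ spectrum ℝ h, t + δ ≠ 0 := fun t ht => by
    have := hspec t ht; positivity
  have hcont : ContinuousOn (fun t : ℝ => (t + δ)⁻¹) (spectrum ℝ h) :=
    ContinuousOn.inv₀ (by fun_prop) hne
  have hcontδ : ContinuousOn (fun t : ℝ => δ * (t + δ)⁻¹) (spectrum ℝ h) :=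
    ContinuousOn.mul continuousOn_const hcont
  set c := cfc (fun t : ℝ => (t + δ)⁻¹) h with hcdef
  refine ⟨h * c * x, hKright _ _ (hKright _ _ hx), ?_⟩
  set r := cfc (fun t : ℝ => δ * (t + δ)⁻¹) h with hrdef
  have hrsa : IsSelfAdjoint r := cfc_predicate _ h
  have hr : (1 : M) - h * c = r := by
    have h1 : h * c = cfc (fun t : ℝ => t * (t + δ)⁻¹) h := by
      conv_lhs => rw [← cfc_id' ℝ h]
      rw [← cfc_mul _ _ h (by fun_prop) hcont]
    rw [h1, ← cfc_one ℝ h, ← cfc_sub (1 : ℝ → ℝ) (fun t : ℝ => t * (t + δ)⁻¹) h (by fun_prop)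
      (ContinuousOn.mul (f := fun t : ℝ => t) (by fun_prop) hcont)]
    exact cfc_congr fun t ht => by
      have := hne t ht
      field_simp
      change (1 : ℝ) * (t + δ) - t = δ
      ring
  have hxr : x - h * c * x = r * x := by rw [← hr]; noncomm_ring
  have hkey : (r * x) * star (r * x) = cfc
      (fun t : ℝ => δ * (t + δ)⁻¹ * t * (δ * (t + δ)⁻¹)) h := by
    have e1 : (r * x) * star (r * x) = r * h * r := by
      rw [star_mul, hrsa.star_eq, hh]; noncomm_ring
    rw [e1, cfc_mul (fun t : ℝ => δ * (t + δ)⁻¹ * t) (fun t : ℝ => δ * (t + δ)⁻¹) h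
        (ContinuousOn.mul (g := fun t : ℝ => t) hcontδ (by fun_prop)) hcontδ,
      cfc_mul (fun t : ℝ => δ * (t + δ)⁻¹) (fun t : ℝ => t) h hcontδ (by fun_prop), cfc_id' ℝ h]
  have hnorm : ‖r * x‖ * ‖r * x‖ ≤ δ := by
    rw [← CStarRing.norm_self_mul_star, hkey]
    exact norm_cfc_le hδ.le fun t ht => aux_bound hδ (hspec t ht)
  rw [dist_eq_norm, hxr]
  nlinarith [norm_nonneg (r * x)]

end Aux


/-- Abstract form of the Kasparov–Stinespring construction of an odd Kasparov
`(A,B)`-module from a semisplit extension.  Here `M` plays the role of the adjointable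
operators `End*_B(Y)` on the Hilbert `B`-module `Y`, `K` the closed two-sided ideal of
compact endomorphisms `K(Y)`, `π : A → M` the left `A`-action, and `p = vv*` the range
projection of the isometry `v : X → Y`, so that the corner `pMp` is `End*_B(X)`,
`ℓ(a) = v*π(a)v` corresponds to `p π(a) p`, and the hypothesis
`ℓ(a)ℓ(a*) - ℓ(aa*) ∈ K(X)` reads `p π(a) p π(a*) p - p π(aa*) p ∈ K`.  Then
`F := 2vv* - 1 = 2p - 1` satisfies `F = F*`, `F² = 1` and `[F, π(a)] ∈ K` for all
`a ∈ A`, i.e. `(Y, F)` is an odd Kasparov `(A,B)`-module. -/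
theorem stinespring_dilation_gives_kasparov_module
    {M : Type*} [NormedRing M] [StarRing M] [CStarRing M] [CompleteSpace M]
    [NormedAlgebra ℂ M] [StarModule ℂ M]
    {A : Type*} [NormedRing A] [StarRing A] [CStarRing A] [CompleteSpace A]
    [NormedAlgebra ℂ A] [StarModule ℂ A]
    (K : Submodule ℂ M) (hKclosed : IsClosed (K : Set M))
    (hKleft : ∀ (x k : M), k ∈ K → x * k ∈ K)
    (hKright : ∀ (x k : M), k ∈ K → k * x ∈ K)
    (π : A →⋆ₐ[ℂ] M)
    (p : M) (hpsa : IsSelfAdjoint p) (hpidem : IsIdempotentElem p)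
    (hℓ : ∀ a : A, p * π a * p * π (star a) * p - p * π (a * star a) * p ∈ K) :
    IsSelfAdjoint (2 * p - 1) ∧
    (2 * p - 1) ^ 2 = 1 ∧
    ∀ a : A, (2 * p - 1) * π a - π a * (2 * p - 1) ∈ K := by
  have hq : IsIdempotentElem ((1 : M) - p) := hpidem.one_sub
  have h1p : star ((1 : M) - p) = 1 - p := by
    rw [star_sub, star_one, hpsa.star_eq]
  refine ⟨?_, ?_, ?_⟩
  · rw [two_mul]
    exact (hpsa.add hpsa).sub (IsSelfAdjoint.one M)
  · have e : ((2 : M) * p - 1) ^ 2 = 4 * (p * p) - 4 * p + 1 := by noncomm_ring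
    rw [e, hpidem.eq, sub_self, zero_add]
  · intro a
    have hw : ((1 : M) - p) * π a * p ∈ K := by
      apply mem_of_star_mul_self_mem K hKclosed hKleft hKright
      have hstar : star (((1 : M) - p) * π a * p) = p * π (star a) * (1 - p) := by
        rw [star_mul, star_mul, hpsa.star_eq, map_star, h1p, mul_assoc]
      rw [hstar]
      have e : p * π (star a) * (1 - p) * (((1 : M) - p) * π a * p)
          = p * π (star a) * (((1 : M) - p) * (1 - p)) * (π a * p) := by noncomm_ring
      rw [e, hq.eq]
      have e2 : p * π (star a) * ((1 : M) - p) * (π a * p)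
          = -(p * π (star a) * p * π a * p - p * (π (star a) * π a) * p) := by
        noncomm_ring
      rw [e2, ← map_mul]
      have h3 := hℓ (star a)
      rw [star_star] at h3
      exact neg_mem h3
    have hu : p * π a * ((1 : M) - p) ∈ K := by
      apply mem_of_mul_star_self_mem K hKclosed hKleft hKright
      have hstar : star (p * π a * ((1 : M) - p)) = (1 - p) * π (star a) * p := by
        rw [star_mul, star_mul, hpsa.star_eq, map_star, h1p, mul_assoc]
      rw [hstar]
      have e : p * π a * ((1 : M) - p) * (((1 : M) - p) * π (star a) * p)
          = p * π a * (((1 : M) - p) * (1 - p)) * (π (star a) * p) := by noncomm_ring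
      rw [e, hq.eq]
      have e2 : p * π a * ((1 : M) - p) * (π (star a) * p)
          = -(p * π a * p * π (star a) * p - p * (π a * π (star a)) * p) := by
        noncomm_ring
      rw [e2, ← map_mul]
      exact neg_mem (hℓ a)
    have e : (2 * p - 1) * π a - π a * (2 * p - 1)
        = 2 * (p * π a * ((1 : M) - p)) - 2 * (((1 : M) - p) * π a * p) := by
      noncomm_ring
    rw [e]
    exact sub_mem (hKleft 2 _ hu) (hKleft 2 _ hw)
end
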